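/- In the ATE setting with $\hat p$ bounded away from 0 and 1-slices as above, let $\varphi:\mathcal{X}\to\{-1,+1\}$, let $G_0$ have density $g_0$ as in the gamma-invariant construction, and let $G_1$ have density $g_1(x,1,1)=\varphi(x)\hat p(x,1,\cdot)$, $g_1(x,1,0)=-\varphi(x)\hat p(x,1,\cdot)$, $g_1(x,0,y)=0$. For small $s,t$ let $P_{s,t}=\hat P+sG_0+tG_1$. Then the ATE functional $\chi(P)=\mathbb{E}_{P_X}[g(1,X;P)-g(0,X;P)]$ satisfies $\chi(P_{s,t}) = \chi(\hat P) + t\int_{\mathcal{X}}\frac{\varphi(x)}{1+s\varphi(x)}\,d\hat P_X(x)$, and consequently the mixed second derivative is $\frac{\partial^2}{\partial s\,\partial t}\chi(P_{s,t})\big|_{s=t=0} = -\int\varphi(x)^2\,d\hat P_X(x) = -1$. -/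

import Mathlib

open MeasureTheory

/-- Two-directional expansion of the ATE functional along the γ-invariant
direction `G₀` and the companion direction `G₁`, and the resulting mixed second
derivative `∂²χ/∂s∂t|₀ = -∫ φ² dP̂_X = -1`. -/
theorem stmt_11 {X : Type*} [MeasurableSpace X] (μX : Measure X)
    (phat : X → ℕ → ℕ → ℝ) (φ : X → ℝ) (l u : ℝ)
    (hl : 0 < l)
    (hpl : ∀ x d y, d ≤ 1 → y ≤ 1 → l ≤ phat x d y)
    (hpu : ∀ x d y, d ≤ 1 → y ≤ 1 → phat x d y ≤ u)
    (hφ : ∀ x, φ x = 1 ∨ φ x = -1)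
    (hφmeas : Measurable φ)
    (hpmeas : ∀ d y, Measurable (fun x => phat x d y))
    (g0 g1 : X → ℕ → ℕ → ℝ)
    (hg0a : ∀ x y, g0 x 1 y = φ x * phat x 1 y)
    (hg0b : ∀ x y, g0 x 0 y
      = -(φ x) * (phat x 1 0 + phat x 1 1) * phat x 0 y
          / (phat x 0 0 + phat x 0 1))
    (hg1a : ∀ x, g1 x 1 1 = φ x * (phat x 1 0 + phat x 1 1))
    (hg1b : ∀ x, g1 x 1 0 = -(φ x) * (phat x 1 0 + phat x 1 1))
    (hg1c : ∀ x y, g1 x 0 y = 0)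
    (pX : X → ℝ)
    (hpX : ∀ x, pX x = phat x 0 0 + phat x 0 1 + phat x 1 0 + phat x 1 1)
    (hpXint : Integrable pX μX)
    (hprob : ∫ x, pX x ∂μX = 1)
    (χ : ℝ → ℝ → ℝ)
    (hχ : ∀ s t : ℝ, χ s t = ∫ x,
      ((phat x 1 1 + s * g0 x 1 1 + t * g1 x 1 1)
          / ((phat x 1 0 + s * g0 x 1 0 + t * g1 x 1 0)
              + (phat x 1 1 + s * g0 x 1 1 + t * g1 x 1 1))
        - (phat x 0 1 + s * g0 x 0 1 + t * g1 x 0 1)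
          / ((phat x 0 0 + s * g0 x 0 0 + t * g1 x 0 0)
              + (phat x 0 1 + s * g0 x 0 1 + t * g1 x 0 1)))
        * pX x ∂μX) :
    (∃ r : ℝ, 0 < r ∧ ∀ s t : ℝ, |s| ≤ r → |t| ≤ r →
      χ s t = χ 0 0 + t * ∫ x, φ x / (1 + s * φ x) * pX x ∂μX)
    ∧ HasDerivAt (fun s : ℝ => deriv (fun t : ℝ => χ s t) 0)
        (-∫ x, (φ x) ^ 2 * pX x ∂μX) 0
    ∧ ∫ x, (φ x) ^ 2 * pX x ∂μX = 1 := by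
  classical
  -- basic facts about φ
  have hφ1 : ∀ x, |φ x| = 1 := fun x => by rcases hφ x with h | h <;> simp [h]
  have hφsq : ∀ x, φ x ^ 2 = 1 := fun x => by rcases hφ x with h | h <;> simp [h]
  -- third conjunct
  have hsq : ∫ x, (φ x) ^ 2 * pX x ∂μX = 1 := by
    have : (fun x => (φ x) ^ 2 * pX x) = pX := funext fun x => by rw [hφsq, one_mul]
    rw [this]; exact hprob
  -- bound constant
  set u' : ℝ := max u l with hu'def
  have hu'pos : 0 < u' := lt_max_of_lt_right hl
  have hpu' : ∀ x d y, d ≤ 1 → y ≤ 1 → phat x d y ≤ u' := fun x d y hd hy =>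
    le_max_of_le_left (hpu x d y hd hy)
  set r : ℝ := min (1/2 : ℝ) (l / (2 * u')) with hrdef
  have hrpos : 0 < r := lt_min (by norm_num) (div_pos hl (by linarith))
  have hr_half : r ≤ 1/2 := min_le_left _ _
  have hr_lu : r ≤ l / (2 * u') := min_le_right _ _
  -- measurability of pX
  have hpXmeas : Measurable pX := by
    have : pX = fun x => phat x 0 0 + phat x 0 1 + phat x 1 0 + phat x 1 1 := funext hpX
    rw [this]
    exact (((hpmeas 0 0).add (hpmeas 0 1)).add (hpmeas 1 0)).add (hpmeas 1 1)
  -- the baseline integrand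
  set q : X → ℝ := fun x =>
    phat x 1 1 / (phat x 1 0 + phat x 1 1) - phat x 0 1 / (phat x 0 0 + phat x 0 1)
    with hqdef
  have hP1pos : ∀ x, 0 < phat x 1 0 + phat x 1 1 := fun x => by
    have h1 := hpl x 1 0 le_rfl (by norm_num)
    have h2 := hpl x 1 1 le_rfl le_rfl
    linarith
  have hP0pos : ∀ x, 0 < phat x 0 0 + phat x 0 1 := fun x => by
    have h1 := hpl x 0 0 (by norm_num) (by norm_num)
    have h2 := hpl x 0 1 (by norm_num) le_rfl
    linarith
  have hqbd : ∀ x, |q x| ≤ 1 := by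
    intro x
    have h1 := hpl x 1 0 le_rfl (by norm_num)
    have h2 := hpl x 0 0 (by norm_num) (by norm_num)
    have ha : 0 ≤ phat x 1 1 / (phat x 1 0 + phat x 1 1) :=
      div_nonneg (by linarith [hpl x 1 1 le_rfl le_rfl]) (hP1pos x).le
    have hb : phat x 1 1 / (phat x 1 0 + phat x 1 1) ≤ 1 :=
      (div_le_one (hP1pos x)).mpr (by linarith)
    have hc : 0 ≤ phat x 0 1 / (phat x 0 0 + phat x 0 1) :=
      div_nonneg (by linarith [hpl x 0 1 (by norm_num) le_rfl]) (hP0pos x).le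
    have hd : phat x 0 1 / (phat x 0 0 + phat x 0 1) ≤ 1 :=
      (div_le_one (hP0pos x)).mpr (by linarith)
    rw [abs_le]; constructor <;> [skip; skip] <;> simp only [hqdef] <;> nlinarith
  have hqmeas : Measurable q := by
    apply Measurable.sub
    · exact (hpmeas 1 1).div ((hpmeas 1 0).add (hpmeas 1 1))
    · exact (hpmeas 0 1).div ((hpmeas 0 0).add (hpmeas 0 1))
  have hqint : Integrable (fun x => q x * pX x) μX :=
    hpXint.bdd_mul (c := 1) hqmeas.aestronglyMeasurable (Filter.Eventually.of_forall fun x => by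
      rw [Real.norm_eq_abs]; exact hqbd x)
  -- χ 0 0
  have hχ00 : χ 0 0 = ∫ x, q x * pX x ∂μX := by
    rw [hχ]
    simp only [zero_mul, add_zero, hqdef]
  -- auxiliary facts for small s
  have h1spos : ∀ (s : ℝ) x, |s| ≤ r → 0 < 1 + s * φ x := by
    intro s x hs
    have : |s * φ x| ≤ 1/2 := by
      rw [abs_mul, hφ1, mul_one]; exact hs.trans hr_half
    have := neg_abs_le (s * φ x)
    linarith
  have hhint : ∀ (s : ℝ), |s| ≤ r → Integrable (fun x => φ x / (1 + s * φ x) * pX x) μX := by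
    intro s hs
    apply hpXint.bdd_mul (c := 2)
    · exact (hφmeas.div (measurable_const.add (measurable_const.mul hφmeas))).aestronglyMeasurable
    · refine Filter.Eventually.of_forall (fun x => ?_)
      have h1 := h1spos s x hs
      have habs : |s * φ x| ≤ 1/2 := by
        rw [abs_mul, hφ1, mul_one]; exact hs.trans hr_half
      have h2 : (1:ℝ)/2 ≤ 1 + s * φ x := by
        have := neg_abs_le (s * φ x); linarith
      rw [Real.norm_eq_abs, abs_div, hφ1, abs_of_pos h1]
      rw [div_le_iff₀ h1]
      linarith
  -- key expansion
  have key : ∀ s t : ℝ, |s| ≤ r → |t| ≤ r →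
      χ s t = χ 0 0 + t * ∫ x, φ x / (1 + s * φ x) * pX x ∂μX := by
    intro s t hs _
    have hpoint : ∀ x,
        ((phat x 1 1 + s * g0 x 1 1 + t * g1 x 1 1)
          / ((phat x 1 0 + s * g0 x 1 0 + t * g1 x 1 0)
              + (phat x 1 1 + s * g0 x 1 1 + t * g1 x 1 1))
        - (phat x 0 1 + s * g0 x 0 1 + t * g1 x 0 1)
          / ((phat x 0 0 + s * g0 x 0 0 + t * g1 x 0 0)
              + (phat x 0 1 + s * g0 x 0 1 + t * g1 x 0 1)))
        * pX x
        = q x * pX x + t * (φ x / (1 + s * φ x) * pX x) := by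
      intro x
      have hP1 := hP1pos x
      have hP0 := hP0pos x
      have h1s := h1spos s x hs
      have hEpos : 0 < (phat x 0 0 + phat x 0 1) - s * φ x * (phat x 1 0 + phat x 1 1) := by
        have hb1 : |s * φ x * (phat x 1 0 + phat x 1 1)| ≤ l := by
          rw [abs_mul, abs_mul, hφ1, mul_one, abs_of_pos hP1]
          calc |s| * (phat x 1 0 + phat x 1 1) ≤ (l / (2 * u')) * (2 * u') := by
                apply mul_le_mul (hs.trans hr_lu) ?_ hP1.le
                  (div_nonneg hl.le (by linarith))
                have := hpu' x 1 0 le_rfl (by norm_num)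
                have := hpu' x 1 1 le_rfl le_rfl
                linarith
            _ = l := by field_simp
        have h1 := hpl x 0 0 (by norm_num) (by norm_num)
        have h2 := hpl x 0 1 (by norm_num) le_rfl
        have := le_abs_self (s * φ x * (phat x 1 0 + phat x 1 1))
        linarith
      rw [hg0a x 0, hg0a x 1, hg0b x 0, hg0b x 1, hg1a x, hg1b x, hg1c x 0, hg1c x 1]
      have eD1 : phat x 1 0 + s * (φ x * phat x 1 0) + t * (-(φ x) * (phat x 1 0 + phat x 1 1))
          + (phat x 1 1 + s * (φ x * phat x 1 1) + t * (φ x * (phat x 1 0 + phat x 1 1)))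
          = (1 + s * φ x) * (phat x 1 0 + phat x 1 1) := by ring
      have eN1 : phat x 1 1 + s * (φ x * phat x 1 1) + t * (φ x * (phat x 1 0 + phat x 1 1))
          = (phat x 1 1 / (phat x 1 0 + phat x 1 1) + t * (φ x / (1 + s * φ x)))
            * ((1 + s * φ x) * (phat x 1 0 + phat x 1 1)) := by
        field_simp
      have eD0 : phat x 0 0 + s * (-(φ x) * (phat x 1 0 + phat x 1 1) * phat x 0 0
            / (phat x 0 0 + phat x 0 1)) + t * 0
          + (phat x 0 1 + s * (-(φ x) * (phat x 1 0 + phat x 1 1) * phat x 0 1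
            / (phat x 0 0 + phat x 0 1)) + t * 0)
          = (phat x 0 0 + phat x 0 1) - s * φ x * (phat x 1 0 + phat x 1 1) := by
        field_simp
        ring
      have eN0 : phat x 0 1 + s * (-(φ x) * (phat x 1 0 + phat x 1 1) * phat x 0 1
            / (phat x 0 0 + phat x 0 1)) + t * 0
          = (phat x 0 1 / (phat x 0 0 + phat x 0 1))
            * ((phat x 0 0 + phat x 0 1) - s * φ x * (phat x 1 0 + phat x 1 1)) := by
        field_simp
        ring
      rw [eD1, eN1, eD0, eN0, mul_div_cancel_right₀ _ (by positivity),
        mul_div_cancel_right₀ _ hEpos.ne']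
      simp only [hqdef]
      ring
    rw [hχ s t, hχ00]
    rw [show (fun x =>
        ((phat x 1 1 + s * g0 x 1 1 + t * g1 x 1 1)
          / ((phat x 1 0 + s * g0 x 1 0 + t * g1 x 1 0)
              + (phat x 1 1 + s * g0 x 1 1 + t * g1 x 1 1))
        - (phat x 0 1 + s * g0 x 0 1 + t * g1 x 0 1)
          / ((phat x 0 0 + s * g0 x 0 0 + t * g1 x 0 0)
              + (phat x 0 1 + s * g0 x 0 1 + t * g1 x 0 1)))
        * pX x)
      = fun x => q x * pX x + t * (φ x / (1 + s * φ x) * pX x) from funext hpoint]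
    rw [integral_add hqint (((hhint s hs)).const_mul t), integral_const_mul]
  refine ⟨⟨r, hrpos, key⟩, ?_, hsq⟩
  -- the mixed derivative
  set A : ℝ := ∫ x, φ x * pX x ∂μX with hA
  have hφint : Integrable (fun x => φ x * pX x) μX :=
    hpXint.bdd_mul (c := 1) hφmeas.aestronglyMeasurable (Filter.Eventually.of_forall fun x => by
      rw [Real.norm_eq_abs, hφ1])
  -- value of the inner integral for small s
  have hI : ∀ s : ℝ, |s| ≤ r →
      (∫ x, φ x / (1 + s * φ x) * pX x ∂μX) = (A - s) / (1 - s ^ 2) := by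
    intro s hs
    have hs1 : |s| < 1 := lt_of_le_of_lt (hs.trans hr_half) (by norm_num)
    have hs1' : (0:ℝ) < 1 - s ^ 2 := by
      have := abs_lt.mp hs1; nlinarith
    obtain ⟨hm1, hm2⟩ := abs_lt.mp hs1
    have hne1 : (1:ℝ) + s ≠ 0 := by linarith
    have hne2 : (1:ℝ) - s ≠ 0 := by linarith
    have hne3 : (1:ℝ) - s ^ 2 ≠ 0 := hs1'.ne'
    have hpt : ∀ x, φ x / (1 + s * φ x) * pX x
        = (1 - s ^ 2)⁻¹ * (φ x * pX x - s * pX x) := by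
      intro x
      rcases hφ x with h | h <;> rw [h] <;>
        rw [div_mul_eq_mul_div, inv_mul_eq_div,
          div_eq_div_iff (ne_of_gt (by linarith)) hne3] <;> ring
    rw [show (fun x => φ x / (1 + s * φ x) * pX x)
        = fun x => (1 - s ^ 2)⁻¹ * (φ x * pX x - s * pX x) from funext hpt]
    rw [integral_const_mul, integral_sub hφint (hpXint.const_mul s),
      integral_const_mul, hprob, ← hA]
    rw [div_eq_inv_mul]
    ring
  -- deriv in t equals the inner integral, for small s
  have hderiv_t : ∀ s : ℝ, |s| ≤ r →
      deriv (fun t : ℝ => χ s t) 0 = (A - s) / (1 - s ^ 2) := by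
    intro s hs
    have haff : HasDerivAt (fun t : ℝ => χ 0 0 + t * ((A - s) / (1 - s ^ 2)))
        ((A - s) / (1 - s ^ 2)) 0 := by
      simpa using ((hasDerivAt_id (0:ℝ)).mul_const ((A - s) / (1 - s ^ 2))).const_add (χ 0 0)
    have hev : (fun t : ℝ => χ s t) =ᶠ[nhds 0]
        (fun t : ℝ => χ 0 0 + t * ((A - s) / (1 - s ^ 2))) := by
      filter_upwards [Metric.ball_mem_nhds (0:ℝ) hrpos] with t ht
      have ht' : |t| ≤ r := by
        rw [Metric.mem_ball, Real.dist_eq, sub_zero] at ht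
        exact ht.le
      rw [key s t hs ht', hI s hs]
    exact (haff.congr_of_eventuallyEq hev).deriv
  -- outer derivative
  have hrat : HasDerivAt (fun s : ℝ => (A - s) / (1 - s ^ 2)) (-1) 0 := by
    have h1 : HasDerivAt (fun s : ℝ => A - s) (-1) 0 := by
      simpa using (hasDerivAt_id (0:ℝ)).const_sub A
    have h2 : HasDerivAt (fun s : ℝ => 1 - s ^ 2) 0 0 := by
      simpa using (hasDerivAt_pow 2 (0:ℝ)).const_sub 1
    have := (h1.div h2 (by norm_num)).congr_deriv (show _ = (-1:ℝ) by norm_num)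
    exact this
  have hev2 : (fun s : ℝ => deriv (fun t : ℝ => χ s t) 0) =ᶠ[nhds 0]
      (fun s : ℝ => (A - s) / (1 - s ^ 2)) := by
    filter_upwards [Metric.ball_mem_nhds (0:ℝ) hrpos] with s hsb
    have hs' : |s| ≤ r := by
      rw [Metric.mem_ball, Real.dist_eq, sub_zero] at hsb
      exact hsb.le
    exact hderiv_t s hs'
  have := hrat.congr_of_eventuallyEq hev2
  rw [hsq]
  simpa using this
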